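/- arXiv:1712.09796 — 2 statements merged into one kernel-verified Lean document; each statement's English description precedes it below -/
import Mathlib

section
/- Let 1 < α < 2, μ < 0, C > 0, M > 0, and let S : [0,∞) → B(X) be a strongly continuous family of bounded linear operators on a Banach space X satisfying ‖S(t)‖ ≤ CM/(1 + |μ|t^α) for all t ≥ 0. Let r > 0, let u ∈ C_b([−r,∞),X), and define κ : [−r,∞) → X by κ(t) = 0 for t ∈ [−r,0] and κ(t) = ∫_0^t S(t−s)u(s) ds for t ≥ 0. If the restriction of u to [0,∞) belongs to PSAP_{ω,r}(X), then κ ∈ C_b([−r,∞),X) and the restriction of κ to [0,∞) belongs to PSAP_{ω,r}(X). -/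
open MeasureTheory Filter Set

lemma real_biSup_le {A : Set ℝ} {f : ℝ → ℝ} {a : ℝ} (ha : 0 ≤ a) (h : ∀ x ∈ A, f x ≤ a) :
    (⨆ x ∈ A, f x) ≤ a :=
  Real.iSup_le (fun x => Real.iSup_le (fun hx => h x hx) ha) ha

lemma le_real_biSup {A : Set ℝ} (f : ℝ → ℝ) {D : ℝ} (hbd : ∀ x ∈ A, f x ≤ D) {x₀ : ℝ}
    (hx₀ : x₀ ∈ A) : f x₀ ≤ ⨆ x ∈ A, f x := by
  have hb : BddAbove (range fun x => ⨆ _ : x ∈ A, f x) := by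
    refine ⟨max D 0, ?_⟩
    rintro y ⟨x, rfl⟩
    exact Real.iSup_le (fun hx => le_max_of_le_left (hbd x hx)) (le_max_right _ _)
  have h1 : f x₀ = ⨆ _ : x₀ ∈ A, f x₀ := by rw [ciSup_pos hx₀]
  rw [h1]; exact le_ciSup hb x₀

lemma real_biSup_nonneg {A : Set ℝ} {f : ℝ → ℝ} (h : ∀ x ∈ A, 0 ≤ f x) :
    0 ≤ ⨆ x ∈ A, f x :=
  Real.iSup_nonneg fun x => Real.iSup_nonneg fun hx => h x hx

/-- the moving-window sup of a continuous bounded nonneg function equals a countable sup,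
hence is measurable -/
lemma measurable_windowSup {f : ℝ → ℝ} (hf : Continuous f) {D : ℝ}
    (hfD : ∀ x, f x ≤ D) (hf0 : ∀ x, 0 ≤ f x) {r : ℝ} (hr : 0 < r) :
    Measurable fun s => ⨆ τ ∈ Icc (s - r) s, f τ := by
  have key : ∀ s : ℝ, (⨆ τ ∈ Icc (s - r) s, f τ)
      = ⨆ q : ℚ, f (s - r + r * max 0 (min 1 (q : ℝ))) := by
    intro s
    have hbR : BddAbove (range fun q : ℚ => f (s - r + r * max 0 (min 1 (q : ℝ)))) := by
      refine ⟨D, ?_⟩; rintro y ⟨q, rfl⟩; exact hfD _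
    apply le_antisymm
    · refine real_biSup_le (Real.iSup_nonneg fun q => hf0 _) ?_
      intro τ hτ
      refine le_of_forall_pos_le_add ?_
      intro ε hε
      obtain ⟨δ, hδ, hcont⟩ := Metric.continuous_iff.1 hf τ ε hε
      -- choose rational point within δ of τ of the form s - r + r * q, q ∈ [0,1]
      set x := (τ - (s - r)) / r with hx
      have hx0 : 0 ≤ x := by
        apply div_nonneg _ hr.le; linarith [hτ.1]
      have hx1 : x ≤ 1 := by
        rw [div_le_one hr]; linarith [hτ.2]
      have hτx : τ = s - r + r * x := by rw [hx, ← mul_div_assoc, mul_div_cancel_left₀ _ hr.ne']; ring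
      rcases eq_or_lt_of_le hx0 with h0 | h0
      · -- x = 0, use q = 0
        have : f τ = f (s - r + r * max 0 (min 1 ((0:ℚ) : ℝ))) := by
          norm_num; rw [hτx, ← h0]; norm_num
        rw [this]
        exact le_add_of_le_of_nonneg (le_ciSup hbR 0) hε.le
      · -- pick rational q in (max (x - δ/r) 0, x)
        have hlt : max (x - δ / r) 0 < x := by
          rcases le_or_gt x (δ / r) with h | h
          · simpa [max_lt_iff] using ⟨by linarith [div_pos hδ hr], h0⟩
          · simp [max_lt_iff]; constructor <;> [linarith [div_pos hδ hr]; exact h0]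
        obtain ⟨q, hq1, hq2⟩ := exists_rat_btwn hlt
        have hq0 : (0:ℝ) < q := lt_of_le_of_lt (le_max_right _ _) hq1
        have hq1' : (q:ℝ) ≤ 1 := le_trans hq2.le hx1
        have hclamp : max 0 (min 1 ((q:ℚ):ℝ)) = (q:ℝ) := by
          rw [min_eq_right hq1', max_eq_right hq0.le]
        have hdist : dist (s - r + r * max 0 (min 1 ((q:ℚ):ℝ))) τ < δ := by
          rw [hclamp, hτx, Real.dist_eq]
          have h1 : x - (q:ℝ) < δ / r := by
            have := lt_of_le_of_lt (le_max_left _ _) hq1; linarith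
          have habs : |s - r + r * (q:ℝ) - (s - r + r * x)| = r * (x - q) := by
            rw [abs_of_nonpos (by nlinarith [hq2])]; ring
          rw [habs]
          calc r * (x - (q:ℝ)) < r * (δ / r) := by
                apply mul_lt_mul_of_pos_left h1 hr
            _ = δ := by field_simp
        have := hcont _ hdist
        rw [Real.dist_eq, abs_sub_lt_iff] at this
        have hle : f τ < f (s - r + r * max 0 (min 1 ((q:ℚ):ℝ))) + ε := by linarith [this.2]
        exact le_trans hle.le (by gcongr; exact le_ciSup hbR q)
    · refine Real.iSup_le (fun q => ?_) (real_biSup_nonneg fun τ _ => hf0 τ)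
      refine le_real_biSup f (fun x _ => hfD x) ?_
      have hc0 : 0 ≤ max 0 (min 1 ((q:ℚ):ℝ)) := le_max_left _ _
      have hc1 : max 0 (min 1 ((q:ℚ):ℝ)) ≤ 1 := max_le zero_le_one (min_le_left _ _)
      exact ⟨by nlinarith, by nlinarith⟩
  simp_rw [key]
  exact Measurable.iSup fun q => (hf.measurable.comp (by fun_prop))

lemma intervalIntegrable_of_bdd {f : ℝ → ℝ} (hm : Measurable f) {D : ℝ}
    (hD : ∀ x, ‖f x‖ ≤ D) (a b : ℝ) : IntervalIntegrable f volume a b := by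
  rw [intervalIntegrable_iff]
  exact Measure.integrableOn_of_bounded (by rw [Set.uIoc]; exact measure_Ioc_lt_top.ne) hm.aestronglyMeasurable
    (Filter.Eventually.of_forall hD)

/-- joint continuity from strong continuity plus a uniform bound -/
lemma continuous_uncurry_of_strong {X : Type*} [NormedAddCommGroup X] [NormedSpace ℝ X]
    (T : ℝ → X →L[ℝ] X) (K : ℝ) (hc : ∀ x, Continuous fun a => T a x)
    (hb : ∀ a, ‖T a‖ ≤ K) : Continuous fun p : ℝ × X => T p.1 p.2 := by
  rw [continuous_iff_continuousAt]
  rintro ⟨a₀, x₀⟩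
  have h1 : ContinuousAt (fun p : ℝ × X => T p.1 x₀) (a₀, x₀) :=
    ((hc x₀).comp continuous_fst).continuousAt
  have h2 : ContinuousAt (fun p : ℝ × X => T p.1 (p.2 - x₀)) (a₀, x₀) := by
    have hz : Tendsto (fun p : ℝ × X => T p.1 (p.2 - x₀)) (nhds (a₀, x₀)) (nhds 0) := by
      apply squeeze_zero_norm (a := fun p : ℝ × X => K * ‖p.2 - x₀‖)
      · intro p
        exact ((T p.1).le_opNorm _).trans
          (mul_le_mul_of_nonneg_right (hb p.1) (norm_nonneg _))
      · have : Tendsto (fun p : ℝ × X => K * ‖p.2 - x₀‖) (nhds (a₀, x₀))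
            (nhds (K * ‖x₀ - x₀‖)) := by
          apply Tendsto.const_mul
          exact ((continuous_snd.sub continuous_const).norm).continuousAt
        simpa using this
    unfold ContinuousAt
    simpa using hz
  have heq : (fun p : ℝ × X => T p.1 p.2)
      = fun p : ℝ × X => T p.1 (p.2 - x₀) + T p.1 x₀ := by
    funext p; rw [← map_add]; simp
  rw [heq]
  exact h2.add h1

/-- `v ∈ PSAP_{ω,r}(X)`: pseudo S-asymptotically ω-periodic of class r. -/
def PSAPclass {X : Type*} [NormedAddCommGroup X] (ω r : ℝ) (v : ℝ → X) : Prop :=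
  Tendsto (fun T : ℝ => (1 / T) * ∫ s in r..T, ⨆ τ ∈ Set.Icc (s - r) s, ‖v (τ + ω) - v τ‖)
    atTop (nhds 0)

set_option maxHeartbeats 1000000 in
/-- Lemma 2.5: if `‖S(t)‖ ≤ CM/(1+|μ|t^α)` with `S` strongly continuous,
`u ∈ C_b([−r,∞),X)` with `u|_{[0,∞)} ∈ PSAP_{ω,r}(X)`, and `κ(t) = 0` on `[−r,0]`,
`κ(t) = ∫_0^t S(t−s)u(s) ds` for `t ≥ 0`, then `κ ∈ C_b([−r,∞),X)` and
`κ|_{[0,∞)} ∈ PSAP_{ω,r}(X)`. -/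
theorem convolution_psapClass {X : Type*} [NormedAddCommGroup X] [NormedSpace ℝ X]
    [CompleteSpace X]
    (α μ C M r ω : ℝ) (hα1 : 1 < α) (hα2 : α < 2) (hμ : μ < 0) (hC : 0 < C) (hM : 0 < M)
    (hr : 0 < r) (hω : 0 < ω)
    (S : ℝ → X →L[ℝ] X)
    (hScont : ∀ x : X, ContinuousOn (fun t => S t x) (Set.Ici 0))
    (hSb : ∀ t ≥ (0:ℝ), ‖S t‖ ≤ C * M / (1 + |μ| * t ^ α))
    (u : ℝ → X)
    (hucont : ContinuousOn u (Set.Ici (-r)))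
    (hubdd : ∃ B, ∀ t ≥ -r, ‖u t‖ ≤ B)
    (huP : PSAPclass ω r u)
    (κ : ℝ → X)
    (hκ0 : ∀ t ∈ Set.Icc (-r) (0:ℝ), κ t = 0)
    (hκ : ∀ t ≥ (0:ℝ), κ t = ∫ s in (0:ℝ)..t, S (t - s) (u s)) :
    ContinuousOn κ (Set.Ici (-r)) ∧ (∃ B, ∀ t ≥ -r, ‖κ t‖ ≤ B) ∧ PSAPclass ω r κ := by
  obtain ⟨B, hB⟩ := hubdd
  have hB0 : 0 ≤ B := le_trans (norm_nonneg _) (hB (-r) le_rfl)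
  have hμ0 : 0 < |μ| := abs_pos.2 hμ.ne
  have hα0 : 0 < α := by linarith
  -- the bounding kernel
  set mg : ℝ → ℝ := fun a => C * M / (1 + |μ| * max a 0 ^ α) with hmgdef
  have hden : ∀ a : ℝ, 0 < 1 + |μ| * max a 0 ^ α := by
    intro a
    have h1 : (0:ℝ) ≤ max a 0 ^ α := Real.rpow_nonneg (le_max_right a 0) α
    nlinarith [abs_nonneg μ]
  have hmg0 : ∀ a, 0 ≤ mg a := fun a => div_nonneg (by positivity) (hden a).le
  have hmgle : ∀ a, mg a ≤ C * M := by
    intro a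
    apply div_le_self (by positivity)
    have h1 : (0:ℝ) ≤ max a 0 ^ α := Real.rpow_nonneg (le_max_right a 0) α
    nlinarith
  have hmgcont : Continuous mg := by
    have h1 : Continuous fun a : ℝ => max a 0 ^ α := by
      rw [continuous_iff_continuousAt]
      intro a
      exact (Real.continuousAt_rpow_const _ _ (Or.inr hα0.le)).comp
        ((continuous_id.max continuous_const).continuousAt)
    exact continuous_const.div (continuous_const.add (continuous_const.mul h1))
      fun a => (hden a).ne'
  have hmganti : Antitone mg := by
    intro a b hab
    have h2 : max a 0 ^ α ≤ max b 0 ^ α :=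
      Real.rpow_le_rpow (le_max_right a 0) (max_le_max hab le_rfl) hα0.le
    rw [hmgdef]
    dsimp only
    apply div_le_div_of_nonneg_left (by positivity) (hden a)
    nlinarith [abs_nonneg μ]
  have hSbn : ∀ a : ℝ, ‖S (max a 0)‖ ≤ mg a := by
    intro a
    simpa using hSb (max a 0) (le_max_right a 0)
  -- extended u
  set ub : ℝ → X := fun t => u (max t (-r)) with hubdef
  have hubc : Continuous ub :=
    hucont.comp_continuous (continuous_id.max continuous_const)
      fun t => mem_Ici.2 (le_max_right _ _)
  have hubB : ∀ t, ‖ub t‖ ≤ B := fun t => hB _ (le_max_right _ _)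
  have hubeq : ∀ t, -r ≤ t → ub t = u t := by
    intro t ht
    rw [hubdef]
    simp [max_eq_left ht]
  -- joint continuity
  have hSbjoint : Continuous fun p : ℝ × X => S (max p.1 0) p.2 := by
    have := continuous_uncurry_of_strong (fun a => S (max a 0)) (C * M)
      (fun x => (hScont x).comp_continuous (continuous_id.max continuous_const)
        fun a => mem_Ici.2 (le_max_right _ _))
      (fun a => (hSbn a).trans (hmgle a))
    exact this
  set F : ℝ → ℝ → X := fun t s => S (max (t - s) 0) (ub s) with hFdef
  have hFc : Continuous (Function.uncurry F) := by
    have : Function.uncurry F = (fun p : ℝ × X => S (max p.1 0) p.2) ∘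
        (fun q : ℝ × ℝ => (q.1 - q.2, ub q.2)) := rfl
    rw [this]
    exact hSbjoint.comp ((continuous_fst.sub continuous_snd).prodMk (hubc.comp continuous_snd))
  have hFcont1 : ∀ t, Continuous fun s => F t s := by
    intro t
    exact hFc.comp (continuous_const.prodMk continuous_id)
  -- continuity of the parametric integral
  have hPc : Continuous fun t : ℝ => ∫ s in (0:ℝ)..t, F t s :=
    intervalIntegral.continuous_parametric_intervalIntegral_of_continuous hFc continuous_id
  set κc : ℝ → X := fun t => ∫ s in (0:ℝ)..(max t 0), F (max t 0) s with hκcdef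
  have hκcc : Continuous κc := hPc.comp (continuous_id.max continuous_const)
  have hκeq : ∀ t ∈ Ici (-r), κ t = κc t := by
    intro t ht
    rcases le_or_gt t 0 with h | h
    · rw [hκcdef]
      dsimp only
      rw [max_eq_right h, intervalIntegral.integral_same, hκ0 t ⟨ht, h⟩]
    · rw [hκcdef]
      dsimp only
      rw [max_eq_left h.le, hκ t h.le]
      apply intervalIntegral.integral_congr
      intro s hs
      rw [uIcc_of_le h.le] at hs
      rw [hFdef]
      dsimp only
      rw [max_eq_left (by linarith [hs.2]), hubeq s (by linarith [hs.1])]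
  have hκcont : ContinuousOn κ (Ici (-r)) := hκcc.continuousOn.congr hκeq
  -- integrability of mg on (0,∞)
  have gInt : IntegrableOn mg (Ioi (0:ℝ)) := by
    have h1 : IntegrableOn mg (Ioc (0:ℝ) 1) :=
      (hmgcont.integrableOn_Icc (a := 0) (b := 1)).mono_set Ioc_subset_Icc_self
    have h2 : IntegrableOn mg (Ioi (1:ℝ)) := by
      have hint : IntegrableOn (fun x : ℝ => C * M / |μ| * x ^ (-α)) (Ioi (1:ℝ)) :=
        (integrableOn_Ioi_rpow_of_lt (by linarith) one_pos).const_mul _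
      apply Integrable.mono' hint
        (hmgcont.aestronglyMeasurable.restrict)
      filter_upwards [ae_restrict_mem measurableSet_Ioi] with x hx
      have hx1 : (1:ℝ) < x := hx
      have hx0 : (0:ℝ) < x := by linarith
      have hmax : max x 0 = x := max_eq_left hx0.le
      have hxa : (0:ℝ) < x ^ α := Real.rpow_pos_of_pos hx0 α
      rw [Real.norm_eq_abs, abs_of_nonneg (hmg0 x)]
      have key : mg x ≤ C * M / (|μ| * x ^ α) := by
        rw [hmgdef]
        dsimp only
        rw [hmax]
        apply div_le_div_of_nonneg_left (by positivity) (by positivity)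
        linarith
      have heq : C * M / |μ| * x ^ (-α) = C * M / (|μ| * x ^ α) := by
        rw [Real.rpow_neg hx0.le]
        field_simp
      rw [heq]
      exact key
    have := h1.union h2
    rwa [Ioc_union_Ioi_eq_Ioi (by norm_num : (0:ℝ) ≤ 1)] at this
  set G : ℝ := ∫ x in Ioi (0:ℝ), mg x with hGdef
  have hG0 : 0 ≤ G := setIntegral_nonneg measurableSet_Ioi fun x _ => hmg0 x
  have hI0 : ∀ t : ℝ, 0 ≤ t → (∫ s in (0:ℝ)..t, mg s) ≤ G := by
    intro t ht
    rw [intervalIntegral.integral_of_le ht]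
    apply setIntegral_mono_set gInt
      (Filter.Eventually.of_forall fun x => hmg0 x)
      (HasSubset.Subset.eventuallyLE Ioc_subset_Ioi_self)
  have hI0nn : ∀ a b : ℝ, a ≤ b → 0 ≤ ∫ s in a..b, mg s := fun a b hab =>
    intervalIntegral.integral_nonneg hab fun x _ => hmg0 x
  -- boundedness of κc
  have hκcbd : ∀ t, ‖κc t‖ ≤ B * G := by
    intro t
    rw [hκcdef]
    dsimp only
    set t' := max t 0 with ht'
    have ht'0 : 0 ≤ t' := le_max_right _ _
    calc ‖∫ s in (0:ℝ)..t', F t' s‖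
        ≤ |∫ s in (0:ℝ)..t', B * mg (t' - s)| := by
          apply intervalIntegral.norm_integral_le_abs_of_norm_le
          · filter_upwards with s
            rw [hFdef]
            dsimp only
            calc ‖S (max (t' - s) 0) (ub s)‖
                ≤ ‖S (max (t' - s) 0)‖ * ‖ub s‖ := ContinuousLinearMap.le_opNorm _ _
              _ ≤ mg (t' - s) * B := mul_le_mul (hSbn _) (hubB s) (norm_nonneg _)
                  (hmg0 _)
              _ = B * mg (t' - s) := mul_comm _ _
          · exact (continuous_const.mul
              (hmgcont.comp (continuous_const.sub continuous_id))).intervalIntegrable _ _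
      _ = |B * ∫ s in (0:ℝ)..t', mg (t' - s)| := by
          rw [intervalIntegral.integral_const_mul]
      _ = B * ∫ s in (0:ℝ)..t', mg (t' - s) := by
          rw [abs_of_nonneg]
          apply mul_nonneg hB0
          exact intervalIntegral.integral_nonneg ht'0 fun x _ => hmg0 _
      _ = B * ∫ s in (0:ℝ)..t', mg s := by
          rw [intervalIntegral.integral_comp_sub_left mg t']
          norm_num
      _ ≤ B * G := mul_le_mul_of_nonneg_left (hI0 t' ht'0) hB0
  refine ⟨hκcont, ⟨B * G, fun t ht => by rw [hκeq t ht]; exact hκcbd t⟩, ?_⟩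
  -- ===== PSAP part =====
  set d : ℝ → ℝ := fun x => ‖ub (x + ω) - ub x‖ with hddef
  have hdc : Continuous d :=
    ((hubc.comp (continuous_id.add continuous_const)).sub hubc).norm
  have hd0 : ∀ x, 0 ≤ d x := fun x => norm_nonneg _
  have hdD : ∀ x, d x ≤ 2 * B := by
    intro x
    have := norm_sub_le (ub (x + ω)) (ub x)
    have h1 := hubB (x + ω)
    have h2 := hubB x
    rw [hddef]
    dsimp only
    linarith
  set W : ℝ → ℝ := fun s => ⨆ τ ∈ Icc (s - r) s, d τ with hWdef
  have hWm : Measurable W := measurable_windowSup hdc hdD hd0 hr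
  have hW0 : ∀ s, 0 ≤ W s := fun s => real_biSup_nonneg fun τ _ => hd0 τ
  have hWD : ∀ s, W s ≤ 2 * B := fun s => real_biSup_le (by linarith) fun τ _ => hdD τ
  have hdW : ∀ s τ, τ ∈ Icc (s - r) s → d τ ≤ W s := fun s τ hτ =>
    le_real_biSup d (fun x _ => hdD x) hτ
  have hWint : ∀ a b : ℝ, IntervalIntegrable W volume a b := fun a b =>
    intervalIntegrable_of_bdd hWm
      (fun x => by rw [Real.norm_eq_abs, abs_of_nonneg (hW0 x)]; exact hWD x) a b
  have hWshiftint : ∀ (c a b : ℝ), IntervalIntegrable (fun s => W (s - c)) volume a b := by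
    intro c a b
    have hm2 : Measurable fun s : ℝ => W (s - c) := hWm.comp (measurable_id.sub measurable_const)
    exact intervalIntegrable_of_bdd hm2
      (fun x => by rw [Real.norm_eq_abs, abs_of_nonneg (hW0 _)]; exact hWD _) a b
  -- hypothesis in terms of W
  have hWavg : Tendsto (fun T => (1 / T) * ∫ s in r..T, W s) atTop (nhds 0) := by
    apply huP.congr'
    filter_upwards [eventually_ge_atTop r] with T hT
    congr 1
    apply intervalIntegral.integral_congr
    intro s hs
    rw [uIcc_of_le hT] at hs
    apply iSup_congr
    intro τ
    apply iSup_congr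
    intro hτ
    have hτ0 : 0 ≤ τ := by linarith [hτ.1, hs.1]
    show ‖u (τ + ω) - u τ‖ = ‖ub (τ + ω) - ub τ‖
    rw [hubeq (τ + ω) (by linarith), hubeq τ (by linarith)]
  have hκeq' : ∀ t : ℝ, 0 ≤ t → κ t = ∫ s in (0:ℝ)..t, F t s := by
    intro t ht
    rw [hκeq t (mem_Ici.2 (by linarith))]
    rw [hκcdef]
    dsimp only
    rw [max_eq_left ht]
  -- pointwise estimate
  have hPhi : ∀ t : ℝ, 0 ≤ t →
      ‖κ (t + ω) - κ t‖ ≤ B * ω * mg t + ∫ σ in (0:ℝ)..t, mg σ * d (t - σ) := by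
    intro t ht
    have htω : 0 ≤ t + ω := by linarith
    rw [hκeq' _ htω, hκeq' _ ht]
    have e1 : (∫ s in (0:ℝ)..(t+ω), F (t+ω) s) = ∫ x in (-ω)..t, F (t+ω) (x+ω) := by
      rw [intervalIntegral.integral_comp_add_right (fun s => F (t+ω) s) ω]
      norm_num
    have hFcont2 : Continuous fun x => F (t+ω) (x+ω) :=
      (hFcont1 _).comp (continuous_id.add continuous_const)
    have e2 : (∫ x in (-ω)..t, F (t+ω) (x+ω))
        = (∫ x in (-ω)..(0:ℝ), F (t+ω) (x+ω)) + ∫ x in (0:ℝ)..t, F (t+ω) (x+ω) :=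
      (intervalIntegral.integral_add_adjacent_intervals
        (hFcont2.intervalIntegrable _ _) (hFcont2.intervalIntegrable _ _)).symm
    rw [e1, e2]
    have key : ∀ x : ℝ, F (t+ω) (x+ω) - F t x = S (max (t - x) 0) (ub (x + ω) - ub x) := by
      intro x
      rw [hFdef]
      dsimp only
      have e : t + ω - (x + ω) = t - x := by ring
      rw [e, map_sub]
    have term1 : ‖∫ x in (-ω)..(0:ℝ), F (t+ω) (x+ω)‖ ≤ B * ω * mg t := by
      have hb : ∀ x ∈ Set.uIoc (-ω) (0:ℝ), ‖F (t+ω) (x+ω)‖ ≤ mg t * B := by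
        intro x hx
        rw [uIoc_of_le (by linarith : -ω ≤ (0:ℝ))] at hx
        have hx0 : x ≤ 0 := hx.2
        rw [hFdef]
        dsimp only
        have e : t + ω - (x + ω) = t - x := by ring
        rw [e]
        calc ‖S (max (t - x) 0) (ub (x + ω))‖
            ≤ ‖S (max (t - x) 0)‖ * ‖ub (x + ω)‖ := ContinuousLinearMap.le_opNorm _ _
          _ ≤ mg (t - x) * B := mul_le_mul (hSbn _) (hubB _) (norm_nonneg _) (hmg0 _)
          _ ≤ mg t * B := mul_le_mul_of_nonneg_right (hmganti (by linarith)) hB0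
      have := intervalIntegral.norm_integral_le_of_norm_le_const hb
      have habs : |(0:ℝ) - (-ω)| = ω := by rw [abs_of_nonneg (by linarith)]; ring_nf
      rw [habs] at this
      calc ‖∫ x in (-ω)..(0:ℝ), F (t+ω) (x+ω)‖ ≤ mg t * B * ω := this
        _ = B * ω * mg t := by ring
    have term2 : ‖(∫ x in (0:ℝ)..t, F (t+ω) (x+ω)) - ∫ x in (0:ℝ)..t, F t x‖
        ≤ ∫ σ in (0:ℝ)..t, mg σ * d (t - σ) := by
      rw [← intervalIntegral.integral_sub (hFcont2.intervalIntegrable _ _)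
        ((hFcont1 t).intervalIntegrable _ _)]
      have hgc : Continuous fun x => mg (t - x) * d x :=
        (hmgcont.comp (continuous_const.sub continuous_id)).mul hdc
      have h1 : ‖∫ x in (0:ℝ)..t, (F (t+ω) (x+ω) - F t x)‖
          ≤ |∫ x in (0:ℝ)..t, mg (t - x) * d x| := by
        apply intervalIntegral.norm_integral_le_abs_of_norm_le
        · filter_upwards with x
          rw [key x]
          calc ‖S (max (t - x) 0) (ub (x + ω) - ub x)‖
              ≤ ‖S (max (t - x) 0)‖ * ‖ub (x + ω) - ub x‖ := ContinuousLinearMap.le_opNorm _ _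
            _ ≤ mg (t - x) * d x := by
                apply mul_le_mul_of_nonneg_right (hSbn _) (norm_nonneg _)
        · exact hgc.intervalIntegrable _ _
      have h2 : |∫ x in (0:ℝ)..t, mg (t - x) * d x| = ∫ x in (0:ℝ)..t, mg (t - x) * d x := by
        apply abs_of_nonneg
        exact intervalIntegral.integral_nonneg ht fun x _ => mul_nonneg (hmg0 _) (hd0 _)
      have h3 : (∫ x in (0:ℝ)..t, mg (t - x) * d x) = ∫ σ in (0:ℝ)..t, mg σ * d (t - σ) := by
        have e : (∫ x in (0:ℝ)..t, mg (t - x) * d x)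
            = ∫ x in (0:ℝ)..t, (fun σ => mg σ * d (t - σ)) (t - x) := by
          apply intervalIntegral.integral_congr
          intro x _
          dsimp only
          rw [sub_sub_cancel]
        rw [e, intervalIntegral.integral_comp_sub_left (fun σ => mg σ * d (t - σ)) t]
        norm_num
      rw [← h3, ← h2]
      exact h1
    calc ‖(∫ x in (-ω)..(0:ℝ), F (t+ω) (x+ω)) + (∫ x in (0:ℝ)..t, F (t+ω) (x+ω))
          - ∫ x in (0:ℝ)..t, F t x‖
        ≤ ‖∫ x in (-ω)..(0:ℝ), F (t+ω) (x+ω)‖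
          + ‖(∫ x in (0:ℝ)..t, F (t+ω) (x+ω)) - ∫ x in (0:ℝ)..t, F t x‖ := by
          rw [add_sub_assoc]
          exact norm_add_le _ _
      _ ≤ B * ω * mg t + ∫ σ in (0:ℝ)..t, mg σ * d (t - σ) := add_le_add term1 term2
  -- covering bound
  have hbig : ∀ (N : ℕ) (s x : ℝ), x ∈ Icc (s - ((N:ℝ)+1)*r) s →
      d x ≤ ∑ k ∈ Finset.range (N+1), W (s - (k:ℝ)*r) := by
    intro N s x hx
    have hy0 : 0 ≤ s - x := by linarith [hx.2]
    set k : ℕ := min N ⌊(s - x)/r⌋₊ with hkdef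
    have hk1 : (k:ℝ)*r ≤ s - x := by
      have h1 : (k:ℝ) ≤ (⌊(s-x)/r⌋₊ : ℝ) := Nat.cast_le.2 (min_le_right _ _)
      have h2 : ((⌊(s-x)/r⌋₊ : ℕ) : ℝ) ≤ (s-x)/r := Nat.floor_le (by positivity)
      calc (k:ℝ)*r ≤ (s-x)/r * r := by nlinarith
        _ = s - x := by field_simp
    have hk2 : s - x ≤ ((k:ℝ)+1)*r := by
      rcases le_or_gt (⌊(s-x)/r⌋₊) N with h | h
      · have hk : k = ⌊(s-x)/r⌋₊ := min_eq_right h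
        have h2 : (s-x)/r < ⌊(s-x)/r⌋₊ + 1 := Nat.lt_floor_add_one _
        rw [hk]
        calc s - x = (s-x)/r * r := by field_simp
          _ ≤ ((⌊(s-x)/r⌋₊ : ℝ) + 1) * r := by nlinarith
      · have hk : k = N := min_eq_left h.le
        rw [hk]
        linarith [hx.1]
    have hmem : x ∈ Icc ((s - (k:ℝ)*r) - r) (s - (k:ℝ)*r) := ⟨by linarith, by linarith⟩
    have hkN : k ∈ Finset.range (N+1) :=
      Finset.mem_range.2 (Nat.lt_succ_of_le (by rw [hkdef]; exact min_le_left _ _))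
    calc d x ≤ W (s - (k:ℝ)*r) := hdW _ _ hmem
      _ ≤ ∑ j ∈ Finset.range (N+1), W (s - (j:ℝ)*r) :=
        Finset.single_le_sum (f := fun j : ℕ => W (s - (j:ℝ)*r)) (fun i _ => hW0 _) hkN
  -- bound on the convolution integral
  have hJb : ∀ (N : ℕ) (s t : ℝ), r ≤ s → t ∈ Icc (s - r) s →
      (∫ σ in (0:ℝ)..t, mg σ * d (t - σ)) ≤
        (∑ k ∈ Finset.range (N+1), W (s - (k:ℝ)*r)) * G
          + (2*B) * (G - ∫ x in (0:ℝ)..((N:ℝ)*r), mg x) := by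
    intro N s t hs ht
    have ht0 : 0 ≤ t := by linarith [ht.1]
    set m : ℝ := min t ((N:ℝ)*r) with hmdef
    have hm0 : 0 ≤ m := le_min ht0 (by positivity)
    have hmt : m ≤ t := min_le_left _ _
    have hmN : m ≤ (N:ℝ)*r := min_le_right _ _
    have hSum0 : 0 ≤ ∑ k ∈ Finset.range (N+1), W (s - (k:ℝ)*r) :=
      Finset.sum_nonneg fun i _ => hW0 _
    have hεnn : 0 ≤ G - ∫ x in (0:ℝ)..((N:ℝ)*r), mg x := by
      have := hI0 ((N:ℝ)*r) (by positivity)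
      linarith
    have hq : Continuous fun σ => mg σ * d (t - σ) :=
      hmgcont.mul (hdc.comp (continuous_const.sub continuous_id))
    have hsplit : (∫ σ in (0:ℝ)..t, mg σ * d (t-σ))
        = (∫ σ in (0:ℝ)..m, mg σ * d (t-σ)) + ∫ σ in m..t, mg σ * d (t-σ) :=
      (intervalIntegral.integral_add_adjacent_intervals
        (hq.intervalIntegrable _ _) (hq.intervalIntegrable _ _)).symm
    rw [hsplit]
    have hb1 : (∫ σ in (0:ℝ)..m, mg σ * d (t-σ))
        ≤ (∑ k ∈ Finset.range (N+1), W (s - (k:ℝ)*r)) * G := by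
      calc (∫ σ in (0:ℝ)..m, mg σ * d (t-σ))
          ≤ ∫ σ in (0:ℝ)..m, mg σ * (∑ k ∈ Finset.range (N+1), W (s - (k:ℝ)*r)) := by
            apply intervalIntegral.integral_mono_on hm0 (hq.intervalIntegrable _ _)
              ((hmgcont.mul continuous_const).intervalIntegrable _ _)
            intro σ hσ
            apply mul_le_mul_of_nonneg_left _ (hmg0 σ)
            apply hbig N s (t - σ)
            constructor
            · have : ((N:ℝ)+1)*r = (N:ℝ)*r + r := by ring
              rw [this]
              linarith [hσ.2, ht.1]
            · linarith [hσ.1, ht.2]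
        _ = (∫ σ in (0:ℝ)..m, mg σ) * (∑ k ∈ Finset.range (N+1), W (s - (k:ℝ)*r)) :=
            intervalIntegral.integral_mul_const _ _
        _ ≤ G * (∑ k ∈ Finset.range (N+1), W (s - (k:ℝ)*r)) :=
            mul_le_mul_of_nonneg_right (hI0 m hm0) hSum0
        _ = (∑ k ∈ Finset.range (N+1), W (s - (k:ℝ)*r)) * G := mul_comm _ _
    have hb2 : (∫ σ in m..t, mg σ * d (t-σ))
        ≤ (2*B) * (G - ∫ x in (0:ℝ)..((N:ℝ)*r), mg x) := by
      have hadj : (∫ σ in (0:ℝ)..m, mg σ) + (∫ σ in m..t, mg σ) = ∫ σ in (0:ℝ)..t, mg σ :=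
        intervalIntegral.integral_add_adjacent_intervals
          (hmgcont.intervalIntegrable _ _) (hmgcont.intervalIntegrable _ _)
      calc (∫ σ in m..t, mg σ * d (t-σ))
          ≤ ∫ σ in m..t, mg σ * (2*B) := by
            apply intervalIntegral.integral_mono_on hmt (hq.intervalIntegrable _ _)
              ((hmgcont.mul continuous_const).intervalIntegrable _ _)
            intro σ _
            exact mul_le_mul_of_nonneg_left (hdD _) (hmg0 σ)
        _ = (∫ σ in m..t, mg σ) * (2*B) := intervalIntegral.integral_mul_const _ _
        _ ≤ (G - ∫ x in (0:ℝ)..((N:ℝ)*r), mg x) * (2*B) := by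
            apply mul_le_mul_of_nonneg_right _ (by linarith : (0:ℝ) ≤ 2*B)
            rcases le_or_gt t ((N:ℝ)*r) with h | h
            · have hmm : m = t := min_eq_left h
              rw [hmm, intervalIntegral.integral_same]
              exact hεnn
            · have hmm : m = (N:ℝ)*r := min_eq_right h.le
              have h1 := hI0 t ht0
              have h2 : (∫ σ in m..t, mg σ) = (∫ σ in (0:ℝ)..t, mg σ)
                  - (∫ σ in (0:ℝ)..m, mg σ) := by linarith [hadj]
              rw [h2, hmm]
              linarith
        _ = (2*B) * (G - ∫ x in (0:ℝ)..((N:ℝ)*r), mg x) := mul_comm _ _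
    exact add_le_add hb1 hb2
  -- window sup for κ
  set dκ : ℝ → ℝ := fun τ => ‖κc (τ + ω) - κc τ‖ with hdκdef
  have hdκc : Continuous dκ := ((hκcc.comp (continuous_id.add continuous_const)).sub hκcc).norm
  have hdκ0 : ∀ x, 0 ≤ dκ x := fun x => norm_nonneg _
  have hdκD : ∀ x, dκ x ≤ 2*(B*G) := by
    intro x
    have := norm_sub_le (κc (x + ω)) (κc x)
    have h1 := hκcbd (x + ω)
    have h2 := hκcbd x
    rw [hdκdef]
    dsimp only
    linarith
  set Wκ : ℝ → ℝ := fun s => ⨆ τ ∈ Icc (s - r) s, dκ τ with hWκdef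
  have hWκm : Measurable Wκ := measurable_windowSup hdκc hdκD hdκ0 hr
  have hWκ0 : ∀ s, 0 ≤ Wκ s := fun s => real_biSup_nonneg fun τ _ => hdκ0 τ
  have hWκD : ∀ s, Wκ s ≤ 2*(B*G) := fun s => real_biSup_le (by positivity) fun τ _ => hdκD τ
  have hWκint : ∀ a b : ℝ, IntervalIntegrable Wκ volume a b := fun a b =>
    intervalIntegrable_of_bdd hWκm
      (fun x => by rw [Real.norm_eq_abs, abs_of_nonneg (hWκ0 x)]; exact hWκD x) a b
  -- key estimate
  have hKey : ∀ (N : ℕ) (s : ℝ), r ≤ s → Wκ s ≤ B*ω*mg (s - r)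
      + ((∑ k ∈ Finset.range (N+1), W (s - (k:ℝ)*r)) * G
        + (2*B) * (G - ∫ x in (0:ℝ)..((N:ℝ)*r), mg x)) := by
    intro N s hs
    have hSum0 : 0 ≤ ∑ k ∈ Finset.range (N+1), W (s - (k:ℝ)*r) :=
      Finset.sum_nonneg fun i _ => hW0 _
    have hεnn : 0 ≤ G - ∫ x in (0:ℝ)..((N:ℝ)*r), mg x := by
      have := hI0 ((N:ℝ)*r) (by positivity)
      linarith
    apply real_biSup_le
    · have h1 : 0 ≤ B*ω*mg (s - r) := by positivity
      nlinarith [mul_nonneg hSum0 hG0]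
    intro τ hτ
    have hτ0 : 0 ≤ τ := by linarith [hτ.1]
    have e : dκ τ = ‖κ (τ + ω) - κ τ‖ := by
      rw [hdκdef]
      dsimp only
      rw [hκeq (τ + ω) (mem_Ici.2 (by linarith)), hκeq τ (mem_Ici.2 (by linarith))]
    rw [e]
    calc ‖κ (τ + ω) - κ τ‖ ≤ B*ω*mg τ + ∫ σ in (0:ℝ)..τ, mg σ * d (τ - σ) := hPhi τ hτ0
      _ ≤ B*ω*mg (s - r)
          + ((∑ k ∈ Finset.range (N+1), W (s - (k:ℝ)*r)) * G
            + (2*B) * (G - ∫ x in (0:ℝ)..((N:ℝ)*r), mg x)) := by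
          apply add_le_add
          · exact mul_le_mul_of_nonneg_left (hmganti hτ.1) (by positivity)
          · exact hJb N s τ hs hτ
  -- the averaged shifted W tends to 0
  have hshift : ∀ k : ℕ, Tendsto (fun T : ℝ => (1/T) * ∫ s in r..T, W (s - (k:ℝ)*r))
      atTop (nhds 0) := by
    intro k
    have hkr0 : (0:ℝ) ≤ (k:ℝ)*r := by positivity
    have hbndT : Tendsto (fun T : ℝ => (2*B*((k:ℝ)*r)) * (1/T)
        + (1/(T - (k:ℝ)*r)) * ∫ s in r..(T - (k:ℝ)*r), W s) atTop (nhds 0) := by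
      have h1 : Tendsto (fun T : ℝ => (2*B*((k:ℝ)*r)) * (1/T)) atTop (nhds 0) := by
        have := tendsto_inv_atTop_zero (𝕜 := ℝ)
        have h2 := this.const_mul (2*B*((k:ℝ)*r))
        simpa [one_div] using h2
      have h2 : Tendsto (fun T : ℝ => (1/(T - (k:ℝ)*r)) * ∫ s in r..(T - (k:ℝ)*r), W s)
          atTop (nhds 0) :=
        hWavg.comp (tendsto_atTop_add_const_right atTop (-((k:ℝ)*r)) tendsto_id)
      simpa using h1.add h2
    apply tendsto_of_tendsto_of_tendsto_of_le_of_le' tendsto_const_nhds hbndT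
    · filter_upwards [eventually_ge_atTop r, eventually_gt_atTop (0:ℝ)] with T hT hT0
      exact mul_nonneg (by positivity)
        (intervalIntegral.integral_nonneg hT fun x _ => hW0 _)
    · filter_upwards [eventually_ge_atTop (r + (k:ℝ)*r + 1), eventually_gt_atTop (0:ℝ)]
        with T hT hT0
      have hTk : r ≤ T - (k:ℝ)*r := by linarith
      have hTk0 : 0 < T - (k:ℝ)*r := by linarith [hr]
      have e1 : (∫ s in r..T, W (s - (k:ℝ)*r)) = ∫ s in (r - (k:ℝ)*r)..(T - (k:ℝ)*r), W s :=
        intervalIntegral.integral_comp_sub_right W ((k:ℝ)*r)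
      have e2 : (∫ s in (r - (k:ℝ)*r)..(T - (k:ℝ)*r), W s)
          = (∫ s in (r - (k:ℝ)*r)..r, W s) + ∫ s in r..(T - (k:ℝ)*r), W s :=
        (intervalIntegral.integral_add_adjacent_intervals (hWint _ _) (hWint _ _)).symm
      have hbd1 : (∫ s in (r - (k:ℝ)*r)..r, W s) ≤ 2*B*((k:ℝ)*r) := by
        calc (∫ s in (r - (k:ℝ)*r)..r, W s) ≤ ∫ s in (r - (k:ℝ)*r)..r, (2*B) := by
              apply intervalIntegral.integral_mono_on (by linarith) (hWint _ _)
                (intervalIntegrable_const)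
              intro x _
              exact hWD x
          _ = 2*B*((k:ℝ)*r) := by
              rw [intervalIntegral.integral_const]
              rw [smul_eq_mul]
              ring
      have hint2nn : 0 ≤ ∫ s in r..(T - (k:ℝ)*r), W s :=
        intervalIntegral.integral_nonneg hTk fun x _ => hW0 _
      rw [e1, e2]
      have hTinv : (1:ℝ)/T ≤ 1/(T - (k:ℝ)*r) := by
        apply one_div_le_one_div_of_le hTk0
        linarith
      calc (1/T) * ((∫ s in (r - (k:ℝ)*r)..r, W s) + ∫ s in r..(T - (k:ℝ)*r), W s)
          = (1/T) * (∫ s in (r - (k:ℝ)*r)..r, W s) + (1/T) * ∫ s in r..(T - (k:ℝ)*r), W s := by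
            ring
        _ ≤ (2*B*((k:ℝ)*r)) * (1/T) + (1/(T - (k:ℝ)*r)) * ∫ s in r..(T - (k:ℝ)*r), W s := by
            apply add_le_add
            · rw [mul_comm]
              exact mul_le_mul_of_nonneg_right hbd1 (by positivity)
            · exact mul_le_mul_of_nonneg_right hTinv hint2nn
  -- conclusion
  have hWκtend : Tendsto (fun T : ℝ => (1/T) * ∫ s in r..T, Wκ s) atTop (nhds 0) := by
    rw [NormedAddCommGroup.tendsto_nhds_zero]
    intro ε hε
    -- choose N
    have hεtend : Tendsto (fun N : ℕ => (2*B) * (G - ∫ x in (0:ℝ)..((N:ℝ)*r), mg x))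
        atTop (nhds 0) := by
      have h1 : Tendsto (fun N : ℕ => ((N:ℝ)*r)) atTop atTop :=
        Tendsto.atTop_mul_const hr tendsto_natCast_atTop_atTop
      have h2 := intervalIntegral_tendsto_integral_Ioi (0:ℝ) gInt h1
      have h3 := (h2.const_sub G).const_mul (2*B)
      simpa [hGdef] using h3
    have hev : ∀ᶠ N : ℕ in atTop, (2*B) * (G - ∫ x in (0:ℝ)..((N:ℝ)*r), mg x) < ε/2 := by
      have : (0:ℝ) < ε/2 := by linarith
      exact hεtend.eventually_lt_const this
    obtain ⟨N, hN⟩ := hev.exists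
    set εN : ℝ := G - ∫ x in (0:ℝ)..((N:ℝ)*r), mg x with hεNdef
    have hεNnn : 0 ≤ εN := by
      have := hI0 ((N:ℝ)*r) (by positivity)
      rw [hεNdef]
      linarith
    -- the dominating function
    set Θ : ℝ → ℝ := fun T => B*ω*G*(1/T)
      + G * (∑ k ∈ Finset.range (N+1), (1/T) * ∫ s in r..T, W (s - (k:ℝ)*r))
      + (2*B)*εN with hΘdef
    have hΘtend : Tendsto Θ atTop (nhds ((2*B)*εN)) := by
      have h1 : Tendsto (fun T : ℝ => B*ω*G*(1/T)) atTop (nhds 0) := by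
        have := (tendsto_inv_atTop_zero (𝕜 := ℝ)).const_mul (B*ω*G)
        simpa [one_div] using this
      have h2 : Tendsto (fun T : ℝ =>
          G * (∑ k ∈ Finset.range (N+1), (1/T) * ∫ s in r..T, W (s - (k:ℝ)*r)))
          atTop (nhds 0) := by
        have hsum : Tendsto (fun T : ℝ =>
            ∑ k ∈ Finset.range (N+1), (1/T) * ∫ s in r..T, W (s - (k:ℝ)*r))
            atTop (nhds 0) := by
          have := tendsto_finset_sum (Finset.range (N+1)) (fun k _ => hshift k)
          simpa using this
        have := hsum.const_mul G
        simpa using this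
      have := (h1.add h2).add (tendsto_const_nhds (x := (2*B)*εN))
      simpa [hΘdef] using this
    have hΘev : ∀ᶠ T : ℝ in atTop, Θ T < ε/2 + ε/4 := by
      apply hΘtend.eventually_lt_const
      rw [hεNdef] at hN ⊢
      linarith
    have hLleΘ : ∀ᶠ T : ℝ in atTop, (1/T) * (∫ s in r..T, Wκ s) ≤ Θ T := by
      filter_upwards [eventually_ge_atTop r, eventually_gt_atTop (0:ℝ)] with T hT hT0
      -- the pointwise bound, integrated
      have hRHSint1 : IntervalIntegrable (fun s => B*ω*mg (s - r)) volume r T :=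
        (continuous_const.mul (hmgcont.comp (continuous_id.sub continuous_const))).intervalIntegrable _ _
      have hRHSint2 : IntervalIntegrable
          (fun s => (∑ k ∈ Finset.range (N+1), W (s - (k:ℝ)*r)) * G) volume r T := by
        apply IntervalIntegrable.mul_const
        apply intervalIntegrable_of_bdd (f := fun s => ∑ k ∈ Finset.range (N+1), W (s - (k:ℝ)*r))
          (D := ((N:ℝ)+1) * (2*B))
        · apply Finset.measurable_sum
          intro k _
          exact hWm.comp (measurable_id.sub measurable_const)
        · intro x
          rw [Real.norm_eq_abs, abs_of_nonneg (Finset.sum_nonneg fun i _ => hW0 _)]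
          calc (∑ k ∈ Finset.range (N+1), W (x - (k:ℝ)*r))
              ≤ ∑ k ∈ Finset.range (N+1), (2*B) :=
                Finset.sum_le_sum fun i _ => hWD _
            _ = ((N:ℝ)+1) * (2*B) := by
                rw [Finset.sum_const, Finset.card_range]
                push_cast
                ring
      have hRHSint3 : IntervalIntegrable (fun _ : ℝ => (2*B)*εN) volume r T :=
        intervalIntegrable_const
      have hmono : (∫ s in r..T, Wκ s) ≤ ∫ s in r..T,
          (B*ω*mg (s - r) + ((∑ k ∈ Finset.range (N+1), W (s - (k:ℝ)*r)) * G + (2*B)*εN)) := by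
        apply intervalIntegral.integral_mono_on hT (hWκint _ _)
          ((hRHSint1.add (hRHSint2.add hRHSint3)))
        intro s hs
        exact hKey N s hs.1
      have hsplitint : (∫ s in r..T,
          (B*ω*mg (s - r) + ((∑ k ∈ Finset.range (N+1), W (s - (k:ℝ)*r)) * G + (2*B)*εN)))
          = (∫ s in r..T, B*ω*mg (s - r))
            + ((∫ s in r..T, (∑ k ∈ Finset.range (N+1), W (s - (k:ℝ)*r)) * G)
              + ∫ s in r..T, ((2:ℝ)*B)*εN) := by
        rw [intervalIntegral.integral_add hRHSint1 (hRHSint2.add hRHSint3),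
          intervalIntegral.integral_add hRHSint2 hRHSint3]
      have ht1 : (∫ s in r..T, B*ω*mg (s - r)) ≤ B*ω*G := by
        calc (∫ s in r..T, B*ω*mg (s - r)) = B*ω * ∫ s in r..T, mg (s - r) := by
              rw [← intervalIntegral.integral_const_mul]
          _ ≤ B*ω*G := by
              apply mul_le_mul_of_nonneg_left _ (by positivity)
              rw [intervalIntegral.integral_comp_sub_right mg r]
              have : r - r = 0 := by ring
              rw [this]
              exact hI0 (T - r) (by linarith)
      have ht2 : (∫ s in r..T, (∑ k ∈ Finset.range (N+1), W (s - (k:ℝ)*r)) * G)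
          = (∑ k ∈ Finset.range (N+1), ∫ s in r..T, W (s - (k:ℝ)*r)) * G := by
        rw [intervalIntegral.integral_mul_const, intervalIntegral.integral_finset_sum]
        intro k _
        exact hWshiftint _ _ _
      have ht3 : (∫ s in r..T, ((2:ℝ)*B)*εN) = (2*B)*εN*(T - r) := by
        rw [intervalIntegral.integral_const, smul_eq_mul]
        ring
      have hfinal : (1/T) * (∫ s in r..T, Wκ s)
          ≤ (1/T) * ((B*ω*G) + ((∑ k ∈ Finset.range (N+1), ∫ s in r..T, W (s - (k:ℝ)*r)) * G
            + (2*B)*εN*(T - r))) := by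
        apply mul_le_mul_of_nonneg_left _ (by positivity)
        calc (∫ s in r..T, Wκ s) ≤ _ := hmono
          _ = _ := hsplitint
          _ ≤ (B*ω*G) + ((∑ k ∈ Finset.range (N+1), ∫ s in r..T, W (s - (k:ℝ)*r)) * G
              + (2*B)*εN*(T - r)) := by
            rw [ht2, ht3]
            exact add_le_add ht1 le_rfl
      calc (1/T) * (∫ s in r..T, Wκ s)
          ≤ (1/T) * ((B*ω*G) + ((∑ k ∈ Finset.range (N+1), ∫ s in r..T, W (s - (k:ℝ)*r)) * G
            + (2*B)*εN*(T - r))) := hfinal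
        _ = B*ω*G*(1/T)
            + G * (∑ k ∈ Finset.range (N+1), (1/T) * ∫ s in r..T, W (s - (k:ℝ)*r))
            + (2*B)*εN*((T - r)/T) := by
            have e : (∑ k ∈ Finset.range (N+1), (1/T) * ∫ s in r..T, W (s - (k:ℝ)*r))
                = (1/T) * ∑ k ∈ Finset.range (N+1), ∫ s in r..T, W (s - (k:ℝ)*r) :=
              (Finset.mul_sum _ _ _).symm
            rw [e]
            ring
        _ ≤ Θ T := by
            rw [hΘdef]
            dsimp only
            have h1 : (2*B)*εN*((T - r)/T) ≤ (2*B)*εN := by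
              apply mul_le_of_le_one_right (by positivity)
              rw [div_le_one hT0]
              linarith
            linarith
    filter_upwards [hΘev, hLleΘ, eventually_ge_atTop r, eventually_gt_atTop (0:ℝ)]
      with T h1 h2 hT hT0
    have hnn : 0 ≤ (1/T) * ∫ s in r..T, Wκ s :=
      mul_nonneg (by positivity) (intervalIntegral.integral_nonneg hT fun x _ => hWκ0 _)
    rw [Real.norm_eq_abs, abs_of_nonneg hnn]
    calc (1/T) * ∫ s in r..T, Wκ s ≤ Θ T := h2
      _ < ε/2 + ε/4 := h1
      _ < ε := by linarith
  -- transfer back to κ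
  show Tendsto _ atTop (nhds 0)
  apply hWκtend.congr'
  filter_upwards [eventually_ge_atTop r] with T hT
  congr 1
  apply intervalIntegral.integral_congr
  intro s hs
  rw [uIcc_of_le hT] at hs
  apply iSup_congr
  intro τ
  apply iSup_congr
  intro hτ
  have hτ0 : 0 ≤ τ := by linarith [hτ.1, hs.1]
  show dκ τ = ‖κ (τ + ω) - κ τ‖
  rw [hdκdef]
  dsimp only
  rw [hκeq (τ + ω) (mem_Ici.2 (by linarith)), hκeq τ (mem_Ici.2 (by linarith))]
end

section
/- Let 1 < α < 2, μ < 0, C > 0, M > 0, and let S : [0,∞) → B(X) be a strongly continuous family of bounded linear operators on a Banach space X satisfying ‖S(t)‖ ≤ CM/(1 + |μ|t^α) for all t ≥ 0. Then for every x ∈ X, ω > 0, and r > 0, the function t ↦ S(t)x belongs to PSAP_{ω,r}(X); more precisely, (1/T)∫_r^T sup_{τ∈[s−r,s]} ‖S(τ+ω)x − S(τ)x‖ ds ≤ (2CM|μ|^{−1/α}π / (α sin(π/α))) · ‖x‖ / T for all T > r, and in particular this average tends to 0 as T → ∞. -/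
open MeasureTheory Filter Set
open Real


lemma aux_integral {b α : ℝ} (hb : 0 < b) (hα : 1 < α) :
    IntegrableOn (fun t : ℝ => (1 + b * t ^ α)⁻¹) (Ioi 0) ∧
      ∫ t in Ioi (0:ℝ), (1 + b * t ^ α)⁻¹
        = b ^ (-(1/α)) * (Real.pi / (α * Real.sin (Real.pi / α))) := by
  have hα0 : 0 < α := by linarith
  have hia : 0 < 1 - 1/α := by
    have : 1/α < 1 := by rw [div_lt_one hα0]; linarith
    linarith
  set μm := volume.restrict (Ioi (0:ℝ)) with hμm
  set f : ℝ → ℝ → ℝ := fun s t => Real.exp (-s) * Real.exp (-(s*b) * t ^ α) with hf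
  have hmeas : AEStronglyMeasurable (Function.uncurry f) (μm.prod μm) := by
    apply Measurable.aestronglyMeasurable
    apply Measurable.mul
    · exact (measurable_fst.neg).exp
    · exact (((measurable_fst.mul_const b).neg.mul (measurable_snd.pow_const α)).exp)
  -- pointwise-in-t identity
  have hpt : ∀ t ∈ Ioi (0:ℝ), ∫ s in Ioi (0:ℝ), f s t = (1 + b * t ^ α)⁻¹ := by
    intro t ht
    have ht0 : (0:ℝ) < t := ht
    have hc : 0 < 1 + b * t ^ α := by
      have := Real.rpow_nonneg ht0.le α
      positivity
    have h1 : ∀ s : ℝ, f s t = s ^ ((1:ℝ) - 1) * Real.exp (-((1 + b * t ^ α) * s)) := by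
      intro s
      rw [hf]
      simp only [sub_self, Real.rpow_zero, one_mul, ← Real.exp_add]
      congr 1
      ring
    calc ∫ s in Ioi (0:ℝ), f s t
        = ∫ s in Ioi (0:ℝ), s ^ ((1:ℝ)-1) * Real.exp (-((1 + b * t ^ α) * s)) := by
          simp_rw [h1]
      _ = (1/(1 + b * t ^ α)) ^ (1:ℝ) * Real.Gamma 1 :=
          integral_rpow_mul_exp_neg_mul_Ioi one_pos hc
      _ = (1 + b * t ^ α)⁻¹ := by
          rw [Real.rpow_one, Real.Gamma_one, mul_one, one_div]
  -- integrability in t for fixed s > 0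
  have hint_t : ∀ s ∈ Ioi (0:ℝ), Integrable (fun t => f s t) μm := by
    intro s hs
    have hsb : 0 < s * b := mul_pos hs hb
    have h := integrableOn_rpow_mul_exp_neg_mul_rpow
      (by norm_num : (-1:ℝ) < 0) hα0 hsb
    have h2 := h.const_mul (Real.exp (-s))
    rw [hμm]
    refine MeasureTheory.IntegrableOn.congr_fun h2 (fun t ht => ?_) measurableSet_Ioi
    rw [hf]
    simp [Real.rpow_zero]
  -- value of the inner integral
  have hval : ∀ s ∈ Ioi (0:ℝ), (∫ t, f s t ∂μm)
      = Real.exp (-s) * ((s*b) ^ (-1/α) * Real.Gamma (1/α + 1)) := by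
    intro s hs
    have hsb : 0 < s * b := mul_pos hs hb
    rw [hμm, hf]
    simp only
    rw [MeasureTheory.integral_const_mul, integral_exp_neg_mul_rpow hα0 hsb]
  have hnorm : ∀ s t, ‖f s t‖ = f s t := by
    intro s t
    rw [hf]
    exact Real.norm_of_nonneg (by positivity)
  -- integrability of s ↦ ∫ t ‖f s t‖
  set c : ℝ := b ^ (-1/α) * Real.Gamma (1/α + 1) with hcdef
  have hGam : IntegrableOn (fun s : ℝ => Real.exp (-s) * s ^ ((1 - 1/α) - 1)) (Ioi 0) :=
    Real.GammaIntegral_convergent hia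
  have hcongr : ∀ s ∈ Ioi (0:ℝ),
      c * (Real.exp (-s) * s ^ ((1 - 1/α) - 1)) = ∫ t, ‖f s t‖ ∂μm := by
    intro s hs
    have hs0 : (0:ℝ) < s := hs
    simp_rw [hnorm]
    rw [hval s hs, hcdef]
    rw [Real.mul_rpow hs0.le hb.le]
    have : ((1:ℝ) - 1/α) - 1 = -1/α := by ring
    rw [this]
    ring
  have h4 : Integrable (fun s => ∫ t, ‖f s t‖ ∂μm) μm := by
    refine MeasureTheory.Integrable.congr (hGam.const_mul c) ?_
    rw [hμm, EventuallyEq, ae_restrict_iff' measurableSet_Ioi]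
    exact Eventually.of_forall fun s hs => hcongr s hs
  have hprod : Integrable (Function.uncurry f) (μm.prod μm) := by
    rw [MeasureTheory.integrable_prod_iff hmeas]
    constructor
    · rw [hμm, ae_restrict_iff' measurableSet_Ioi]
      exact Eventually.of_forall fun s hs => hint_t s hs
    · exact h4
  -- integrability conclusion
  have hint1 : IntegrableOn (fun t : ℝ => (1 + b * t ^ α)⁻¹) (Ioi 0) := by
    have h := hprod.integral_prod_right
    refine MeasureTheory.Integrable.congr h ?_
    rw [hμm, EventuallyEq, ae_restrict_iff' measurableSet_Ioi]
    refine Eventually.of_forall fun t ht => ?_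
    simp only [Function.uncurry_apply_pair]
    exact hpt t ht
  refine ⟨hint1, ?_⟩
  -- swap and compute
  have hswap := MeasureTheory.integral_integral_swap (f := f) hprod
  have hR : (∫ t, ∫ s, f s t ∂μm ∂μm) = ∫ t in Ioi (0:ℝ), (1 + b * t ^ α)⁻¹ := by
    rw [hμm]
    exact setIntegral_congr_fun measurableSet_Ioi fun t ht => hpt t ht
  have hL : (∫ s, ∫ t, f s t ∂μm ∂μm) = c * Real.Gamma (1 - 1/α) := by
    have e1 : (∫ s, ∫ t, f s t ∂μm ∂μm)
        = ∫ s in Ioi (0:ℝ), c * (Real.exp (-s) * s ^ ((1 - 1/α) - 1)) := by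
      rw [hμm]
      refine setIntegral_congr_fun measurableSet_Ioi fun s hs => ?_
      have := hcongr s hs
      simp_rw [hnorm] at this
      exact this.symm
    rw [e1, MeasureTheory.integral_const_mul, ← Real.Gamma_eq_integral hia]
  have key : ∫ t in Ioi (0:ℝ), (1 + b * t ^ α)⁻¹ = c * Real.Gamma (1 - 1/α) := by
    rw [← hR, ← hswap, hL]
  rw [key, hcdef]
  have hne : (1/α : ℝ) ≠ 0 := by positivity
  rw [Real.Gamma_add_one hne]
  rw [mul_assoc, mul_assoc, Real.Gamma_mul_Gamma_one_sub, mul_one_div]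
  rw [neg_div]
  ring


/-- estimate (3.4): if `‖S(t)‖ ≤ CM/(1+|μ|t^α)` with `S` strongly
continuous, then for every `x`, `t ↦ S(t)x ∈ PSAP_{ω,r}(X)`; more precisely the averaged
quantity is bounded by `2CM|μ|^{−1/α}π/(α sin(π/α))·‖x‖/T` and tends to `0`. -/
theorem solution_operator_psapClass {X : Type*} [NormedAddCommGroup X] [NormedSpace ℝ X]
    (α μ C M : ℝ) (hα1 : 1 < α) (hα2 : α < 2) (hμ : μ < 0) (hC : 0 < C) (hM : 0 < M)
    (S : ℝ → X →L[ℝ] X)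
    (hScont : ∀ y : X, ContinuousOn (fun t => S t y) (Set.Ici 0))
    (hSb : ∀ t ≥ (0:ℝ), ‖S t‖ ≤ C * M / (1 + |μ| * t ^ α))
    (x : X) (ω r : ℝ) (hω : 0 < ω) (hr : 0 < r) :
    (∀ T > r,
      (1 / T) * (∫ s in r..T, ⨆ τ ∈ Set.Icc (s - r) s, ‖S (τ + ω) x - S τ x‖) ≤
        2 * C * M * |μ| ^ (-(1 / α)) * Real.pi / (α * Real.sin (Real.pi / α)) * ‖x‖ / T) ∧
    PSAPclass ω r (fun t => S t x) := by
  have hα0 : 0 < α := by linarith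
  have hb : 0 < |μ| := abs_pos.mpr hμ.ne
  obtain ⟨hInt, hVal⟩ := aux_integral hb hα1
  have hF0 : ∀ s : ℝ, 0 ≤ ⨆ τ ∈ Set.Icc (s - r) s, ‖S (τ + ω) x - S τ x‖ := fun s =>
    Real.iSup_nonneg fun τ => Real.iSup_nonneg fun _ => norm_nonneg _
  set c0 : ℝ := 2 * C * M * ‖x‖ with hc0
  have hc0nn : 0 ≤ c0 := by positivity
  -- pointwise bound on the sup
  have stepA : ∀ s : ℝ, r < s →
      (⨆ τ ∈ Set.Icc (s - r) s, ‖S (τ + ω) x - S τ x‖)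
        ≤ c0 * (1 + |μ| * (s - r) ^ α)⁻¹ := by
    intro s hs
    have hsr : 0 ≤ s - r := by linarith
    have hposd : 0 < 1 + |μ| * (s - r) ^ α := by
      have := Real.rpow_nonneg hsr α
      positivity
    have hbnd : 0 ≤ c0 * (1 + |μ| * (s - r) ^ α)⁻¹ :=
      mul_nonneg hc0nn (inv_nonneg.mpr hposd.le)
    refine Real.iSup_le (fun τ => Real.iSup_le (fun hτ => ?_) hbnd) hbnd
    have hτ0 : 0 ≤ τ := le_trans hsr hτ.1
    have key : ∀ u : ℝ, s - r ≤ u → 0 ≤ u →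
        ‖S u x‖ ≤ C * M * ‖x‖ * (1 + |μ| * (s - r) ^ α)⁻¹ := by
      intro u hu hu0
      have h1 : ‖S u x‖ ≤ ‖S u‖ * ‖x‖ := (S u).le_opNorm x
      have h2 : ‖S u‖ ≤ C * M / (1 + |μ| * u ^ α) := hSb u hu0
      have h3 : 1 + |μ| * (s - r) ^ α ≤ 1 + |μ| * u ^ α := by
        have hr1 := Real.rpow_le_rpow hsr hu hα0.le
        nlinarith [abs_nonneg μ]
      calc ‖S u x‖ ≤ (C * M / (1 + |μ| * u ^ α)) * ‖x‖ :=
            le_trans h1 (mul_le_mul_of_nonneg_right h2 (norm_nonneg x))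
        _ ≤ (C * M / (1 + |μ| * (s - r) ^ α)) * ‖x‖ := by
            gcongr
        _ = C * M * ‖x‖ * (1 + |μ| * (s - r) ^ α)⁻¹ := by
            rw [div_eq_mul_inv]; ring
    calc ‖S (τ + ω) x - S τ x‖ ≤ ‖S (τ + ω) x‖ + ‖S τ x‖ := norm_sub_le _ _
      _ ≤ C * M * ‖x‖ * (1 + |μ| * (s - r) ^ α)⁻¹
            + C * M * ‖x‖ * (1 + |μ| * (s - r) ^ α)⁻¹ :=
          add_le_add (key (τ + ω) (by linarith [hτ.1]) (by linarith))
            (key τ hτ.1 hτ0)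
      _ = c0 * (1 + |μ| * (s - r) ^ α)⁻¹ := by rw [hc0]; ring
  -- main estimate for T > r
  have main : ∀ T > r,
      (1 / T) * (∫ s in r..T, ⨆ τ ∈ Set.Icc (s - r) s, ‖S (τ + ω) x - S τ x‖) ≤
        2 * C * M * |μ| ^ (-(1 / α)) * Real.pi / (α * Real.sin (Real.pi / α)) * ‖x‖ / T := by
    intro T hT
    have hrT : r ≤ T := hT.le
    have hT0 : 0 < T := lt_trans hr hT
    -- integrability of the dominating function on Ioc r T
    have hGc : Continuous fun s : ℝ => (s - r) ^ α := by
      have h1 : Continuous fun y : ℝ => y ^ α := by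
        rw [continuous_iff_continuousAt]
        intro y
        exact Real.continuousAt_rpow_const y α (Or.inr hα0.le)
      exact h1.comp (continuous_id.sub continuous_const)
    have hGint : IntegrableOn (fun s : ℝ => (1 + |μ| * (s - r) ^ α)⁻¹) (Ioc r T) := by
      have hcont : ContinuousOn (fun s : ℝ => (1 + |μ| * (s - r) ^ α)⁻¹) (Icc r T) := by
        apply ContinuousOn.inv₀
        · exact (continuous_const.add (continuous_const.mul hGc)).continuousOn
        · intro s hs
          have h0 : 0 ≤ (s - r) ^ α := Real.rpow_nonneg (by linarith [hs.1]) α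
          positivity
      exact (hcont.integrableOn_Icc).mono_set Ioc_subset_Icc_self
    -- compare integrals
    have hmono : (∫ s in Ioc r T, ⨆ τ ∈ Set.Icc (s - r) s, ‖S (τ + ω) x - S τ x‖)
        ≤ ∫ s in Ioc r T, c0 * (1 + |μ| * (s - r) ^ α)⁻¹ := by
      refine MeasureTheory.integral_mono_of_nonneg (Eventually.of_forall hF0)
        (hGint.const_mul c0) ?_
      rw [EventuallyLE, ae_restrict_iff' measurableSet_Ioc]
      exact Eventually.of_forall fun s hs => stepA s hs.1
    -- evaluate/estimate the dominating integral
    have hGval : (∫ s in Ioc r T, (1 + |μ| * (s - r) ^ α)⁻¹)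
        ≤ |μ| ^ (-(1/α)) * (Real.pi / (α * Real.sin (Real.pi / α))) := by
      have e1 : (∫ s in Ioc r T, (1 + |μ| * (s - r) ^ α)⁻¹)
          = ∫ u in Ioc (0:ℝ) (T - r), (1 + |μ| * u ^ α)⁻¹ := by
        rw [← intervalIntegral.integral_of_le hrT,
          intervalIntegral.integral_comp_sub_right (fun u => (1 + |μ| * u ^ α)⁻¹) r,
          sub_self, intervalIntegral.integral_of_le (by linarith : (0:ℝ) ≤ T - r)]
      rw [e1, ← hVal]
      refine MeasureTheory.setIntegral_mono_set hInt ?_ (HasSubset.Subset.eventuallyLE Ioc_subset_Ioi_self)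
      rw [EventuallyLE, ae_restrict_iff' measurableSet_Ioi]
      refine Eventually.of_forall fun u hu => ?_
      have h0 : 0 ≤ u ^ α := Real.rpow_nonneg (le_of_lt hu) α
      positivity
    -- put it together
    have chain : (∫ s in r..T, ⨆ τ ∈ Set.Icc (s - r) s, ‖S (τ + ω) x - S τ x‖)
        ≤ c0 * (|μ| ^ (-(1/α)) * (Real.pi / (α * Real.sin (Real.pi / α)))) := by
      rw [intervalIntegral.integral_of_le hrT]
      calc (∫ s in Ioc r T, ⨆ τ ∈ Set.Icc (s - r) s, ‖S (τ + ω) x - S τ x‖)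
          ≤ ∫ s in Ioc r T, c0 * (1 + |μ| * (s - r) ^ α)⁻¹ := hmono
        _ = c0 * ∫ s in Ioc r T, (1 + |μ| * (s - r) ^ α)⁻¹ :=
            MeasureTheory.integral_const_mul c0 _
        _ ≤ c0 * (|μ| ^ (-(1/α)) * (Real.pi / (α * Real.sin (Real.pi / α)))) :=
            mul_le_mul_of_nonneg_left hGval hc0nn
    calc (1 / T) * (∫ s in r..T, ⨆ τ ∈ Set.Icc (s - r) s, ‖S (τ + ω) x - S τ x‖)
        ≤ (1 / T) * (c0 * (|μ| ^ (-(1/α)) * (Real.pi / (α * Real.sin (Real.pi / α))))) :=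
          mul_le_mul_of_nonneg_left chain (by positivity)
      _ = 2 * C * M * |μ| ^ (-(1 / α)) * Real.pi / (α * Real.sin (Real.pi / α)) * ‖x‖ / T := by
          rw [hc0]; ring
  refine ⟨main, ?_⟩
  -- the averaged quantity tends to zero
  unfold PSAPclass
  show Tendsto (fun T : ℝ => (1 / T) *
      ∫ s in r..T, ⨆ τ ∈ Set.Icc (s - r) s, ‖S (τ + ω) x - S τ x‖) atTop (nhds 0)
  refine squeeze_zero' (g := fun T : ℝ => 2 * C * M * |μ| ^ (-(1 / α)) * Real.pi / (α * Real.sin (Real.pi / α)) * ‖x‖ / T) ?_ ?_ ?_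
  · filter_upwards [eventually_ge_atTop r] with T hT
    have hT0 : 0 ≤ T := le_trans hr.le hT
    exact mul_nonneg (by positivity) (intervalIntegral.integral_nonneg hT fun u _ => hF0 u)
  · filter_upwards [eventually_gt_atTop r] with T hT
    exact main T hT
  · exact tendsto_const_nhds.div_atTop tendsto_id
end
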